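/- (Transmutation relation between I^{(−1,1)} and I^{(1,1)}.) Let n ≥ 3, let m_1,…,m_n be half-integers, and fix j ∈ {3,…,n}. Writing r := Σ_{i=1}^n r_i and s := Σ_{i=1}^n s_i, one has Σ_{(ε,r,s) ∈ I^{(−1,1)}, s ≥ 1} r!·(s−1)!·ε_j·s_j·∏_{i=1}^n π^{(ε_i)}_{r_i,s_i}(m_i) = Σ_{(ε,r,s) ∈ I^{(1,1)}, r ≥ 1} (r−1)!·s!·(1−ε_j)·r_j·∏_{i=1}^n π^{(ε_i)}_{r_i,s_i}(m_i). -/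

import Mathlib

/-- Generalized binomial coefficient `binom(x,k) = x(x-1)⋯(x-k+1)/k!`. -/
def qbinom (x : ℚ) (k : ℕ) : ℚ := (∏ i ∈ Finset.range k, (x - i)) / (Nat.factorial k)

/-- `p_{k,e}(m) = binom(m+e/2-1,k)·binom(m-e/2+k,k)`. -/
def pke (k : ℕ) (e : ℤ) (m : ℚ) : ℚ :=
  qbinom (m + (e : ℚ) / 2 - 1) k * qbinom (m - (e : ℚ) / 2 + k) k

open Classical in
/-- `π^{(ε)}_{r,s}(m) = C(r+s,s)·p_{r+s,s+1+ε}(m)` if `m-(s+1+ε)/2 ∈ ℤ`, and `0` otherwise. -/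
noncomputable def piQ (r s : ℕ) (ε : ℤ) (m : ℚ) : ℚ :=
  if ∃ z : ℤ, m - ((s : ℚ) + 1 + (ε : ℚ)) / 2 = (z : ℚ) then
    (Nat.choose (r + s) s : ℚ) * pke (r + s) ((s : ℤ) + 1 + ε) m
  else 0

/-- The index set `I`: triples `(ε, r, s)` with `ε ∈ {0,1}^n`, `r, s ∈ ℕ^n`, satisfying
`Σ ε_i = Σ r_i + 1` and `Σ (1-ε_i) = Σ s_i + 2` (these conditions force `r_i, s_i < n`,
so no tuple of `I` is lost by the bound used in the ambient finite set). -/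
def Iset (n : ℕ) : Finset ((Fin n → ℤ) × (Fin n → ℕ) × (Fin n → ℕ)) :=
  ((Fintype.piFinset fun _ : Fin n => ({0, 1} : Finset ℤ)) ×ˢ
      ((Fintype.piFinset fun _ : Fin n => Finset.range n) ×ˢ
        (Fintype.piFinset fun _ : Fin n => Finset.range n))).filter
    fun t => (∑ i, t.1 i) = (∑ i, (t.2.1 i : ℤ)) + 1 ∧
      (∑ i, (1 - t.1 i)) = (∑ i, (t.2.2 i : ℤ)) + 2

/-- The index set `I^{(e₁,e₂)}`: as `I`, but with `ε_1 = e₁` and `ε_2 = e₂` fixed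
(possibly equal to `-1`), and `ε_i ∈ {0,1}` for `i ≥ 3`. -/
def IsetE (n : ℕ) (e₁ e₂ : ℤ) : Finset ((Fin n → ℤ) × (Fin n → ℕ) × (Fin n → ℕ)) :=
  ((Fintype.piFinset fun _ : Fin n => ({-1, 0, 1} : Finset ℤ)) ×ˢ
      ((Fintype.piFinset fun _ : Fin n => Finset.range n) ×ˢ
        (Fintype.piFinset fun _ : Fin n => Finset.range n))).filter
    fun t =>
      (∀ i : Fin n, (i.val = 0 → t.1 i = e₁) ∧ (i.val = 1 → t.1 i = e₂) ∧
        (2 ≤ i.val → t.1 i = 0 ∨ t.1 i = 1)) ∧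
      (∑ i, t.1 i) = (∑ i, (t.2.1 i : ℤ)) + 1 ∧
      (∑ i, (1 - t.1 i)) = (∑ i, (t.2.2 i : ℤ)) + 2

lemma qbinom_succ (x : ℚ) (k : ℕ) : qbinom x (k+1) = qbinom x k * (x - k) / (k+1) := by
  unfold qbinom
  rw [Finset.prod_range_succ, Nat.factorial_succ]
  have h1 : ((k.factorial : ℚ)) ≠ 0 := by exact_mod_cast k.factorial_ne_zero
  have h2 : ((k:ℚ)+1) ≠ 0 := by positivity
  push_cast
  rw [div_mul_eq_mul_div, div_div, mul_comm ((k:ℚ)+1) (k.factorial:ℚ)]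

lemma qbinom_succ' (x : ℚ) (k : ℕ) : qbinom (x+1) (k+1) = qbinom x k * (x+1) / (k+1) := by
  unfold qbinom
  rw [Finset.prod_range_succ', Nat.factorial_succ]
  have h1 : ((k.factorial : ℚ)) ≠ 0 := by exact_mod_cast k.factorial_ne_zero
  have h2 : ((k:ℚ)+1) ≠ 0 := by positivity
  have h3 : ∀ i ∈ Finset.range k, (x + 1 - ((i:ℚ)+1)) = x - i := by
    intro i _; push_cast; ring
  rw [Finset.prod_congr rfl (fun i hi => by push_cast; ring : ∀ i ∈ Finset.range k, (x + 1 - (((i+1):ℕ):ℚ)) = x - i)]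
  push_cast
  rw [div_mul_eq_mul_div, div_div, mul_comm ((k:ℚ)+1) (k.factorial:ℚ)]
  congr 1
  ring

lemma pke_A (k : ℕ) (e : ℤ) (m : ℚ) :
    ((k:ℚ)+1)^2 * pke (k+1) e m
      = (m + (e:ℚ)/2 - 1 - k) * (m - (e:ℚ)/2 + k + 1) * pke k e m := by
  unfold pke
  have h1 : qbinom (m + (e:ℚ)/2 - 1) (k+1) = qbinom (m + (e:ℚ)/2 - 1) k * (m + (e:ℚ)/2 - 1 - k) / (k+1) :=
    qbinom_succ _ k
  have h2 : qbinom (m - (e:ℚ)/2 + ((k+1:ℕ):ℚ)) (k+1) = qbinom (m - (e:ℚ)/2 + k) k * (m - (e:ℚ)/2 + k + 1) / (k+1) := by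
    have := qbinom_succ' (m - (e:ℚ)/2 + k) k
    push_cast
    rw [show m - (e:ℚ)/2 + ((k:ℚ)+1) = (m - (e:ℚ)/2 + k) + 1 by ring, this]
  rw [h1, h2]
  have h2 : ((k:ℚ)+1) ≠ 0 := by positivity
  field_simp

lemma pke_B (k : ℕ) (e : ℤ) (m : ℚ) :
    ((k:ℚ)+1)^2 * pke (k+1) (e+2) m
      = (m + (e:ℚ)/2) * (m - (e:ℚ)/2) * pke k e m := by
  unfold pke
  have he : (((e+2):ℤ):ℚ)/2 = (e:ℚ)/2 + 1 := by push_cast; ring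
  rw [he]
  have h1 : qbinom (m + ((e:ℚ)/2 + 1) - 1) (k+1) = qbinom (m + (e:ℚ)/2 - 1) k * (m + (e:ℚ)/2) / (k+1) := by
    have := qbinom_succ' (m + (e:ℚ)/2 - 1) k
    rw [show m + ((e:ℚ)/2 + 1) - 1 = (m + (e:ℚ)/2 - 1) + 1 by ring, this]
    ring_nf
  have h2 : qbinom (m - ((e:ℚ)/2 + 1) + ((k+1:ℕ):ℚ)) (k+1) = qbinom (m - (e:ℚ)/2 + k) k * (m - (e:ℚ)/2) / (k+1) := by
    have := qbinom_succ (m - (e:ℚ)/2 + k) k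
    push_cast
    rw [show m - ((e:ℚ)/2 + 1) + ((k:ℚ)+1) = m - (e:ℚ)/2 + k by ring, this]
    ring_nf
  rw [h1, h2]
  have h3 : ((k:ℚ)+1) ≠ 0 := by positivity
  field_simp

lemma chooseFact1 (a b : ℕ) : (a+1) * Nat.choose (a+b+1) b = (a+b+1) * Nat.choose (a+b) b := by
  have s1 : (a+b).choose a = (a+b).choose b := by
    have := Nat.choose_symm (show b ≤ a+b by omega)
    rwa [show a+b-b = a by omega] at this
  have s2 : (a+b+1).choose (a+1) = (a+b+1).choose b := by
    have := Nat.choose_symm (show b ≤ a+b+1 by omega)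
    rwa [show a+b+1-b = a+1 by omega] at this
  have h1 := Nat.add_one_mul_choose_eq (a+b) a
  rw [s1, s2] at h1
  exact (mul_comm (a+1) _).trans h1.symm

lemma chooseFact2 (a b : ℕ) :
    (b+1) * Nat.choose (a+b+1) (b+1) = (a+1) * Nat.choose (a+b+1) b := by
  have h := Nat.choose_succ_right_eq (a+b+1) b
  rw [show a+b+1-b = a+1 by omega] at h
  rw [mul_comm (b+1) _, mul_comm (a+1) _]
  exact h

lemma pke_shift (b : ℕ) (m : ℚ) : pke b ((b:ℤ)+2) m = pke b (b:ℤ) m := by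
  cases b with
  | zero => simp [pke, qbinom]
  | succ c =>
    rw [show ((c+1:ℕ):ℤ) = (c:ℤ)+1 by push_cast; ring]
    have hK2 : (((c:ℕ):ℚ)+1)^2 ≠ 0 := by positivity
    apply mul_left_cancel₀ hK2
    have hB := pke_B c ((c:ℤ)+1) m
    have hA := pke_A c ((c:ℤ)+1) m
    push_cast at hB hA
    push_cast
    linear_combination hB - hA

lemma piQ_R1_succ (a b : ℕ) (m : ℚ) :
    piQ (a+1) b 1 m = piQ (a+1) b (-1) m + piQ a b (-1) m := by
  unfold piQ
  have hiff : (∃ z : ℤ, m - ((b : ℚ) + 1 + ((1:ℤ) : ℚ)) / 2 = (z : ℚ)) ↔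
      (∃ z : ℤ, m - ((b : ℚ) + 1 + ((-1:ℤ) : ℚ)) / 2 = (z : ℚ)) := by
    constructor
    · rintro ⟨z, hz⟩; exact ⟨z+1, by push_cast at hz ⊢; linarith⟩
    · rintro ⟨z, hz⟩; exact ⟨z-1, by push_cast at hz ⊢; linarith⟩
  by_cases h : ∃ z : ℤ, m - ((b : ℚ) + 1 + ((-1:ℤ) : ℚ)) / 2 = (z : ℚ)
  · rw [if_pos h, if_pos h, if_pos (hiff.mpr h)]
    rw [show a+1+b = a+b+1 by omega, show (b:ℤ)+1+1 = (b:ℤ)+2 by ring,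
      show (b:ℤ)+1+(-1) = (b:ℤ) by ring]
    have hK2 : (((a+b:ℕ):ℚ)+1)^2 ≠ 0 := by positivity
    apply mul_left_cancel₀ hK2
    have hB := pke_B (a+b) (b:ℤ) m
    have hA := pke_A (a+b) (b:ℤ) m
    have hXY : ((a:ℚ)+1) * (((a+b+1).choose b : ℕ) : ℚ)
        = ((a:ℚ)+(b:ℚ)+1) * (((a+b).choose b : ℕ) : ℚ) := by
      have := chooseFact1 a b
      have h2 : (((a+1) * Nat.choose (a+b+1) b : ℕ):ℚ) = (((a+b+1) * Nat.choose (a+b) b : ℕ):ℚ) := by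
        exact congrArg (fun x : ℕ => (x:ℚ)) this
      push_cast at h2
      linarith
    push_cast at hB hA ⊢
    linear_combination (((a+b+1).choose b : ℕ) : ℚ) * hB - (((a+b+1).choose b : ℕ) : ℚ) * hA
      + (pke (a+b) (b:ℤ) m * ((a:ℚ)+(b:ℚ)+1)) * hXY
  · rw [if_neg h, if_neg h, if_neg (fun hh => h (hiff.mp hh))]; ring

lemma piQ_R1_zero (b : ℕ) (m : ℚ) : piQ 0 b 1 m = piQ 0 b (-1) m := by
  unfold piQ
  have hiff : (∃ z : ℤ, m - ((b : ℚ) + 1 + ((1:ℤ) : ℚ)) / 2 = (z : ℚ)) ↔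
      (∃ z : ℤ, m - ((b : ℚ) + 1 + ((-1:ℤ) : ℚ)) / 2 = (z : ℚ)) := by
    constructor
    · rintro ⟨z, hz⟩; exact ⟨z+1, by push_cast at hz ⊢; linarith⟩
    · rintro ⟨z, hz⟩; exact ⟨z-1, by push_cast at hz ⊢; linarith⟩
  by_cases h : ∃ z : ℤ, m - ((b : ℚ) + 1 + ((-1:ℤ) : ℚ)) / 2 = (z : ℚ)
  · rw [if_pos h, if_pos (hiff.mpr h)]
    rw [show (b:ℤ)+1+1 = (b:ℤ)+2 by ring, show (b:ℤ)+1+(-1) = (b:ℤ) by ring,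
      show (0:ℕ)+b = b by omega, pke_shift]
  · rw [if_neg h, if_neg (fun hh => h (hiff.mp hh))]

lemma piQ_R2 (a b : ℕ) (m : ℚ) :
    ((b:ℚ)+1) * piQ a (b+1) 1 m
      = ((a:ℚ)+1) * piQ (a+1) b 0 m + (a:ℚ) * piQ a b 0 m := by
  unfold piQ
  have hiff : (∃ z : ℤ, m - (((b+1:ℕ) : ℚ) + 1 + ((1:ℤ) : ℚ)) / 2 = (z : ℚ)) ↔
      (∃ z : ℤ, m - ((b : ℚ) + 1 + ((0:ℤ) : ℚ)) / 2 = (z : ℚ)) := by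
    constructor
    · rintro ⟨z, hz⟩; exact ⟨z+1, by push_cast at hz ⊢; linarith⟩
    · rintro ⟨z, hz⟩; exact ⟨z-1, by push_cast at hz ⊢; linarith⟩
  by_cases h : ∃ z : ℤ, m - ((b : ℚ) + 1 + ((0:ℤ) : ℚ)) / 2 = (z : ℚ)
  · rw [if_pos h, if_pos h, if_pos (hiff.mpr h)]
    rw [show a+(b+1) = a+b+1 by omega, show a+1+b = a+b+1 by omega,
      show ((b+1:ℕ):ℤ)+1+1 = (b:ℤ)+1+2 by push_cast; ring,
      show (b:ℤ)+1+0 = (b:ℤ)+1 by ring]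
    have hK2 : (((a+b:ℕ):ℚ)+1)^2 ≠ 0 := by positivity
    apply mul_left_cancel₀ hK2
    have hB := pke_B (a+b) ((b:ℤ)+1) m
    have hA := pke_A (a+b) ((b:ℤ)+1) m
    have hXY1 : ((b:ℚ)+1) * (((a+b+1).choose (b+1) : ℕ) : ℚ)
        = ((a:ℚ)+1) * (((a+b+1).choose b : ℕ) : ℚ) := by
      have h2 : (((b+1) * Nat.choose (a+b+1) (b+1) : ℕ):ℚ)
          = (((a+1) * Nat.choose (a+b+1) b : ℕ):ℚ) := by
        exact congrArg (fun x : ℕ => (x:ℚ)) (chooseFact2 a b)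
      push_cast at h2
      linarith
    have hXY2 : ((a:ℚ)+1) * (((a+b+1).choose b : ℕ) : ℚ)
        = ((a:ℚ)+(b:ℚ)+1) * (((a+b).choose b : ℕ) : ℚ) := by
      have h2 : (((a+1) * Nat.choose (a+b+1) b : ℕ):ℚ) = (((a+b+1) * Nat.choose (a+b) b : ℕ):ℚ) := by
        exact congrArg (fun x : ℕ => (x:ℚ)) (chooseFact1 a b)
      push_cast at h2
      linarith
    push_cast at hB hA ⊢
    linear_combination ((b:ℚ)+1) * (((a+b+1).choose (b+1) : ℕ) : ℚ) * hB
      - ((a:ℚ)+1) * (((a+b+1).choose b : ℕ) : ℚ) * hA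
      + ((m^2 - ((b:ℚ)+1)^2/4) * pke (a+b) ((b:ℤ)+1) m) * hXY1
      + ((a:ℚ) * ((a:ℚ)+(b:ℚ)+1) * pke (a+b) ((b:ℤ)+1) m) * hXY2
  · rw [if_neg h, if_neg h, if_neg (fun hh => h (hiff.mp hh))]; ring

-- ### combinatorial helpers

abbrev Tup (n : ℕ) := (Fin n → ℤ) × (Fin n → ℕ) × (Fin n → ℕ)

lemma mem_IsetE_iff {n : ℕ} {e₁ e₂ : ℤ} {t : Tup n} :
    t ∈ IsetE n e₁ e₂ ↔
      (∀ i, t.1 i = -1 ∨ t.1 i = 0 ∨ t.1 i = 1) ∧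
      (∀ i, t.2.1 i < n) ∧ (∀ i, t.2.2 i < n) ∧
      (∀ i : Fin n, (i.val = 0 → t.1 i = e₁) ∧ (i.val = 1 → t.1 i = e₂) ∧
        (2 ≤ i.val → t.1 i = 0 ∨ t.1 i = 1)) ∧
      (∑ i, t.1 i) = (∑ i, (t.2.1 i : ℤ)) + 1 ∧
      (∑ i, (1 - t.1 i)) = (∑ i, (t.2.2 i : ℤ)) + 2 := by
  unfold IsetE
  simp only [Finset.mem_filter, Finset.mem_product, Fintype.mem_piFinset, Finset.mem_insert,
    Finset.mem_singleton, Finset.mem_range]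
  tauto

lemma sum_update_univ {n : ℕ} {β : Type*} [AddCommMonoid β] (f : Fin n → β) (c : Fin n) (v : β) :
    ∑ i, Function.update f c v i = v + ∑ i ∈ Finset.univ.erase c, f i := by
  rw [Finset.sum_update_of_mem (Finset.mem_univ c), Finset.sdiff_singleton_eq_erase]

lemma sum_eq_add_erase {n : ℕ} {β : Type*} [AddCommMonoid β] (f : Fin n → β) (c : Fin n) :
    ∑ i, f i = f c + ∑ i ∈ Finset.univ.erase c, f i :=
  (Finset.add_sum_erase _ f (Finset.mem_univ c)).symm

lemma sum_update_nat {n : ℕ} (f : Fin n → ℕ) (c : Fin n) (v : ℕ) :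
    (∑ i, Function.update f c v i) + f c = v + ∑ i, f i := by
  rw [sum_update_univ, sum_eq_add_erase f c]; ring

lemma sum_update2_int {n : ℕ} (f : Fin n → ℤ) (p q : Fin n) (hpq : p ≠ q) (a b : ℤ) :
    ∑ i, Function.update (Function.update f p a) q b i = a + b + ∑ i, f i - f p - f q := by
  rw [sum_update_univ]
  rw [Finset.sum_update_of_mem (Finset.mem_erase.mpr ⟨hpq, Finset.mem_univ p⟩),
    Finset.sdiff_singleton_eq_erase]
  have e1 := Finset.add_sum_erase Finset.univ f (Finset.mem_univ q)
  have e2 := Finset.add_sum_erase (Finset.univ.erase q) f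
    (Finset.mem_erase.mpr ⟨hpq, Finset.mem_univ p⟩)
  linarith

lemma sum_one_sub {n : ℕ} (f : Fin n → ℤ) : ∑ i, (1 - f i) = n - ∑ i, f i := by
  rw [Finset.sum_sub_distrib]
  simp [Finset.card_univ]

lemma sum_bound {n : ℕ} {e₁ e₂ : ℤ} {t : Tup n} (ht : t ∈ IsetE n e₁ e₂) :
    (∑ i, t.2.1 i) + (∑ i, t.2.2 i) + 3 = n := by
  obtain ⟨-, -, -, -, h1, h2⟩ := mem_IsetE_iff.mp ht
  have hsum : (∑ i : Fin n, t.1 i) + (∑ i : Fin n, (1 - t.1 i)) = n := by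
    rw [← Finset.sum_add_distrib]
    simp [Finset.card_univ]
  have hr : (∑ i, (t.2.1 i : ℤ)) = ((∑ i, t.2.1 i : ℕ) : ℤ) := by push_cast; rfl
  have hs : (∑ i, (t.2.2 i : ℤ)) = ((∑ i, t.2.2 i : ℕ) : ℤ) := by push_cast; rfl
  rw [hr] at h1
  rw [hs] at h2
  omega

def phiT (n : ℕ) [NeZero n] (c j : Fin n) (t : Tup n) : Tup n :=
  (Function.update (Function.update t.1 0 1) j 0,
   Function.update t.2.1 c (t.2.1 c + 1),
   Function.update t.2.2 j (t.2.2 j - 1))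

def psiT (n : ℕ) [NeZero n] (c j : Fin n) (t : Tup n) : Tup n :=
  (Function.update (Function.update t.1 0 (-1)) j 1,
   Function.update t.2.1 c (t.2.1 c - 1),
   Function.update t.2.2 j (t.2.2 j + 1))

lemma sum_phi (n : ℕ) [NeZero n] (j : Fin n) (hj : 2 ≤ j.val) (c : Fin n) (g : Tup n → ℚ) :
    ∑ t ∈ (IsetE n (-1) 1).filter (fun t => t.1 j = 1 ∧ 1 ≤ t.2.2 j), g (phiT n c j t)
      = ∑ t ∈ (IsetE n 1 1).filter (fun t => t.1 j = 0 ∧ 1 ≤ t.2.1 c), g t := by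
  have hj0 : j ≠ 0 := by
    intro h
    rw [h] at hj
    simp at hj
  have h0j : (0 : Fin n) ≠ j := hj0.symm
  refine Finset.sum_nbij' (phiT n c j) (psiT n c j) ?_ ?_ ?_ ?_ (fun a _ => rfl)
  · -- forward membership
    intro t ht
    rw [Finset.mem_filter] at ht ⊢
    obtain ⟨htI, hεj, hsj⟩ := ht
    obtain ⟨hv, hr, hs, hcl, hc1, hc2⟩ := mem_IsetE_iff.mp htI
    have hε0 : t.1 0 = -1 := (hcl 0).1 rfl
    have hS := sum_bound htI
    have hrc : t.2.1 c ≤ ∑ i, t.2.1 i :=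
      Finset.single_le_sum (fun i _ => Nat.zero_le _) (Finset.mem_univ c)
    have hSr : ∑ i, (phiT n c j t).2.1 i = (∑ i, t.2.1 i) + 1 := by
      have := sum_update_nat t.2.1 c (t.2.1 c + 1)
      show ∑ i, Function.update t.2.1 c (t.2.1 c + 1) i = _
      omega
    have hSs : (∑ i, (phiT n c j t).2.2 i) + 1 = ∑ i, t.2.2 i := by
      have := sum_update_nat t.2.2 j (t.2.2 j - 1)
      show (∑ i, Function.update t.2.2 j (t.2.2 j - 1) i) + 1 = _
      omega
    have hSe : ∑ i, (phiT n c j t).1 i = (∑ i, t.1 i) + 1 := by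
      show ∑ i, Function.update (Function.update t.1 0 1) j 0 i = _
      rw [sum_update2_int t.1 0 j h0j 1 0, hε0, hεj]
      ring
    refine ⟨mem_IsetE_iff.mpr ⟨?_, ?_, ?_, ?_, ?_, ?_⟩, ?_, ?_⟩
    · intro i
      simp only [phiT, Function.update_apply]
      split_ifs
      · tauto
      · tauto
      · exact hv i
    · intro i
      simp only [phiT, Function.update_apply]
      split_ifs
      · omega
      · exact hr i
    · intro i
      simp only [phiT, Function.update_apply]
      split_ifs
      · have := hs j; omega
      · exact hs i
    · intro i
      refine ⟨?_, ?_, ?_⟩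
      · intro h0
        have hij : i ≠ j := by
          intro h
          subst h
          omega
        have hi0 : i = 0 := Fin.ext (by simpa using h0)
        simp only [phiT, Function.update_apply]
        rw [if_neg hij, if_pos hi0]
      · intro h1
        have hij : i ≠ j := by
          intro h
          subst h
          omega
        have hi0 : i ≠ 0 := by
          intro h
          subst h
          simp at h1
        simp only [phiT, Function.update_apply]
        rw [if_neg hij, if_neg hi0]
        exact (hcl i).2.1 h1
      · intro h2i
        by_cases hij : i = j
        · subst hij
          simp only [phiT, Function.update_apply, if_pos rfl]
          left; rfl
        · have hi0 : i ≠ 0 := by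
            intro h
            subst h
            rw [Fin.val_zero] at h2i
            omega
          simp only [phiT, Function.update_apply]
          rw [if_neg hij, if_neg hi0]
          exact (hcl i).2.2 h2i
    · -- ε sum condition
      have hcast : (∑ i, ((phiT n c j t).2.1 i : ℤ)) = ((∑ i, (phiT n c j t).2.1 i : ℕ) : ℤ) := by
        push_cast; rfl
      have hcast' : (∑ i, (t.2.1 i : ℤ)) = ((∑ i, t.2.1 i : ℕ) : ℤ) := by
        push_cast; rfl
      rw [hSe, hcast, hSr]
      rw [hcast'] at hc1
      push_cast
      push_cast at hc1
      linarith
    · -- s sum condition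
      have hcast : (∑ i, ((phiT n c j t).2.2 i : ℤ)) = ((∑ i, (phiT n c j t).2.2 i : ℕ) : ℤ) := by
        push_cast; rfl
      have hcast' : (∑ i, (t.2.2 i : ℤ)) = ((∑ i, t.2.2 i : ℕ) : ℤ) := by
        push_cast; rfl
      rw [sum_one_sub, hSe, hcast]
      rw [hcast'] at hc2
      rw [sum_one_sub] at hc2
      have : ((∑ i, (phiT n c j t).2.2 i : ℕ) : ℤ) + 1 = ((∑ i, t.2.2 i : ℕ) : ℤ) := by
        exact_mod_cast congrArg (Nat.cast : ℕ → ℤ) hSs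
      linarith
    · -- ε_j = 0
      show Function.update (Function.update t.1 0 1) j 0 j = 0
      rw [Function.update_self]
    · -- 1 ≤ r_c
      show 1 ≤ Function.update t.2.1 c (t.2.1 c + 1) c
      rw [Function.update_self]
      omega
  · -- backward membership
    intro t ht
    rw [Finset.mem_filter] at ht ⊢
    obtain ⟨htI, hεj, hrc⟩ := ht
    obtain ⟨hv, hr, hs, hcl, hc1, hc2⟩ := mem_IsetE_iff.mp htI
    have hε0 : t.1 0 = 1 := (hcl 0).1 rfl
    have hS := sum_bound htI
    have hsc : t.2.2 j ≤ ∑ i, t.2.2 i :=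
      Finset.single_le_sum (fun i _ => Nat.zero_le _) (Finset.mem_univ j)
    have hSr : (∑ i, (psiT n c j t).2.1 i) + 1 = ∑ i, t.2.1 i := by
      have := sum_update_nat t.2.1 c (t.2.1 c - 1)
      have h1 : t.2.1 c ≤ ∑ i, t.2.1 i :=
        Finset.single_le_sum (fun i _ => Nat.zero_le _) (Finset.mem_univ c)
      show (∑ i, Function.update t.2.1 c (t.2.1 c - 1) i) + 1 = _
      omega
    have hSs : ∑ i, (psiT n c j t).2.2 i = (∑ i, t.2.2 i) + 1 := by
      have := sum_update_nat t.2.2 j (t.2.2 j + 1)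
      show ∑ i, Function.update t.2.2 j (t.2.2 j + 1) i = _
      omega
    have hSe : (∑ i, (psiT n c j t).1 i) + 1 = ∑ i, t.1 i := by
      show (∑ i, Function.update (Function.update t.1 0 (-1)) j 1 i) + 1 = _
      rw [sum_update2_int t.1 0 j h0j (-1) 1, hε0, hεj]
      ring
    refine ⟨mem_IsetE_iff.mpr ⟨?_, ?_, ?_, ?_, ?_, ?_⟩, ?_, ?_⟩
    · intro i
      simp only [psiT, Function.update_apply]
      split_ifs
      · tauto
      · tauto
      · exact hv i
    · intro i
      simp only [psiT, Function.update_apply]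
      split_ifs
      · have := hr c; omega
      · exact hr i
    · intro i
      simp only [psiT, Function.update_apply]
      split_ifs
      · omega
      · exact hs i
    · intro i
      refine ⟨?_, ?_, ?_⟩
      · intro h0
        have hij : i ≠ j := by
          intro h
          subst h
          omega
        have hi0 : i = 0 := Fin.ext (by simpa using h0)
        simp only [psiT, Function.update_apply]
        rw [if_neg hij, if_pos hi0]
      · intro h1
        have hij : i ≠ j := by
          intro h
          subst h
          omega
        have hi0 : i ≠ 0 := by
          intro h
          subst h
          simp at h1
        simp only [psiT, Function.update_apply]
        rw [if_neg hij, if_neg hi0]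
        exact (hcl i).2.1 h1
      · intro h2i
        by_cases hij : i = j
        · subst hij
          simp only [psiT, Function.update_apply, if_pos rfl]
          right; rfl
        · have hi0 : i ≠ 0 := by
            intro h
            subst h
            rw [Fin.val_zero] at h2i
            omega
          simp only [psiT, Function.update_apply]
          rw [if_neg hij, if_neg hi0]
          exact (hcl i).2.2 h2i
    · have hcast : (∑ i, ((psiT n c j t).2.1 i : ℤ)) = ((∑ i, (psiT n c j t).2.1 i : ℕ) : ℤ) := by
        push_cast; rfl
      have hcast' : (∑ i, (t.2.1 i : ℤ)) = ((∑ i, t.2.1 i : ℕ) : ℤ) := by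
        push_cast; rfl
      rw [hcast]
      rw [hcast'] at hc1
      have h1 : ((∑ i, (psiT n c j t).2.1 i : ℕ) : ℤ) + 1 = ((∑ i, t.2.1 i : ℕ) : ℤ) := by
        exact_mod_cast congrArg (Nat.cast : ℕ → ℤ) hSr
      linarith [hSe]
    · have hcast : (∑ i, ((psiT n c j t).2.2 i : ℤ)) = ((∑ i, (psiT n c j t).2.2 i : ℕ) : ℤ) := by
        push_cast; rfl
      have hcast' : (∑ i, (t.2.2 i : ℤ)) = ((∑ i, t.2.2 i : ℕ) : ℤ) := by
        push_cast; rfl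
      rw [sum_one_sub, hcast]
      rw [hcast', sum_one_sub] at hc2
      have h1 : ((∑ i, (psiT n c j t).2.2 i : ℕ) : ℤ) = ((∑ i, t.2.2 i : ℕ) : ℤ) + 1 := by
        exact_mod_cast congrArg (Nat.cast : ℕ → ℤ) hSs
      linarith [hSe]
    · show Function.update (Function.update t.1 0 (-1)) j 1 j = 1
      rw [Function.update_self]
    · show 1 ≤ Function.update t.2.2 j (t.2.2 j + 1) j
      rw [Function.update_self]
      omega
  · -- left inverse
    intro t ht
    rw [Finset.mem_filter] at ht
    obtain ⟨htI, hεj, hsj⟩ := ht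
    have hε0 : t.1 0 = -1 := ((mem_IsetE_iff.mp htI).2.2.2.1 0).1 rfl
    refine Prod.ext ?_ (Prod.ext ?_ ?_)
    · show Function.update (Function.update
        (Function.update (Function.update t.1 0 1) j 0) 0 (-1)) j 1 = t.1
      funext i
      simp only [Function.update_apply]
      split_ifs with h1 h2
      · subst h1; exact hεj.symm
      · subst h2; exact hε0.symm
      · rfl
    · show Function.update (Function.update t.2.1 c (t.2.1 c + 1)) c
        (Function.update t.2.1 c (t.2.1 c + 1) c - 1) = t.2.1
      rw [Function.update_self, Function.update_idem, Nat.add_sub_cancel,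
        Function.update_eq_self]
    · show Function.update (Function.update t.2.2 j (t.2.2 j - 1)) j
        (Function.update t.2.2 j (t.2.2 j - 1) j + 1) = t.2.2
      rw [Function.update_self, Function.update_idem, Nat.sub_add_cancel hsj,
        Function.update_eq_self]
  · -- right inverse
    intro t ht
    rw [Finset.mem_filter] at ht
    obtain ⟨htI, hεj, hrc⟩ := ht
    have hε0 : t.1 0 = 1 := ((mem_IsetE_iff.mp htI).2.2.2.1 0).1 rfl
    refine Prod.ext ?_ (Prod.ext ?_ ?_)
    · show Function.update (Function.update
        (Function.update (Function.update t.1 0 (-1)) j 1) 0 1) j 0 = t.1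
      funext i
      simp only [Function.update_apply]
      split_ifs with h1 h2
      · subst h1; exact hεj.symm
      · subst h2; exact hε0.symm
      · rfl
    · show Function.update (Function.update t.2.1 c (t.2.1 c - 1)) c
        (Function.update t.2.1 c (t.2.1 c - 1) c + 1) = t.2.1
      rw [Function.update_self, Function.update_idem, Nat.sub_add_cancel hrc,
        Function.update_eq_self]
    · show Function.update (Function.update t.2.2 j (t.2.2 j + 1)) j
        (Function.update t.2.2 j (t.2.2 j + 1) j - 1) = t.2.2
      rw [Function.update_self, Function.update_idem, Nat.add_sub_cancel,
        Function.update_eq_self]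


noncomputable def qq (n : ℕ) [NeZero n] (m : Fin n → ℚ) (j : Fin n) (d : ℕ) (t : Tup n) : ℚ :=
  (Nat.factorial ((∑ i, t.2.1 i) - 1) : ℚ) * (Nat.factorial (∑ i, t.2.2 i) : ℚ) * (t.2.1 j : ℚ) *
    (piQ (t.2.1 0 - d) (t.2.2 0) (-1) (m 0) *
      ∏ i ∈ Finset.univ.erase 0, piQ (t.2.1 i) (t.2.2 i) (t.1 i) (m i))

lemma term_L (n : ℕ) [NeZero n] (m : Fin n → ℚ) (j : Fin n) (hj : 2 ≤ j.val) {t : Tup n}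
    (htI : t ∈ IsetE n (-1) 1) (hεj : t.1 j = 1) (hsj : 1 ≤ t.2.2 j) :
    (Nat.factorial (∑ i, t.2.1 i) : ℚ) * (Nat.factorial ((∑ i, t.2.2 i) - 1) : ℚ) *
      (t.1 j : ℚ) * (t.2.2 j : ℚ) * ∏ i, piQ (t.2.1 i) (t.2.2 i) (t.1 i) (m i)
    = qq n m j 0 (phiT n j j t) + qq n m j 1 (phiT n 0 j t) := by
  have hj0 : j ≠ 0 := by
    intro h
    rw [h] at hj
    simp at hj
  have h0j : (0 : Fin n) ≠ j := hj0.symm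
  have hε0 : t.1 0 = -1 := ((mem_IsetE_iff.mp htI).2.2.2.1 0).1 rfl
  obtain ⟨b, hb⟩ : ∃ b, t.2.2 j = b + 1 := ⟨t.2.2 j - 1, by omega⟩
  set P := ∏ i ∈ (Finset.univ.erase 0).erase j, piQ (t.2.1 i) (t.2.2 i) (t.1 i) (m i) with hPdef
  have hsplit : ∏ i, piQ (t.2.1 i) (t.2.2 i) (t.1 i) (m i)
      = piQ (t.2.1 j) (t.2.2 j) 1 (m j) * (piQ (t.2.1 0) (t.2.2 0) (-1) (m 0) * P) := by
    rw [← Finset.mul_prod_erase Finset.univ _ (Finset.mem_univ j)]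
    rw [← Finset.mul_prod_erase (Finset.univ.erase j) _
      (Finset.mem_erase.mpr ⟨h0j, Finset.mem_univ 0⟩)]
    rw [hεj, hε0, hPdef, Finset.erase_right_comm]
  have e1 : (∑ i, (phiT n j j t).2.1 i) - 1 = ∑ i, t.2.1 i := by
    have := sum_update_nat t.2.1 j (t.2.1 j + 1)
    show (∑ i, Function.update t.2.1 j (t.2.1 j + 1) i) - 1 = _
    omega
  have e1' : (∑ i, (phiT n 0 j t).2.1 i) - 1 = ∑ i, t.2.1 i := by
    have := sum_update_nat t.2.1 0 (t.2.1 0 + 1)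
    show (∑ i, Function.update t.2.1 0 (t.2.1 0 + 1) i) - 1 = _
    omega
  have e2 : ∑ i, (phiT n j j t).2.2 i = (∑ i, t.2.2 i) - 1 := by
    have := sum_update_nat t.2.2 j (t.2.2 j - 1)
    show (∑ i, Function.update t.2.2 j (t.2.2 j - 1) i) = _
    omega
  have e2' : ∑ i, (phiT n 0 j t).2.2 i = (∑ i, t.2.2 i) - 1 := e2
  have e3 : (phiT n j j t).2.1 j = t.2.1 j + 1 := Function.update_self _ _ _
  have e3' : (phiT n 0 j t).2.1 j = t.2.1 j := Function.update_of_ne hj0 _ _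
  have e4 : (phiT n j j t).2.1 0 - 0 = t.2.1 0 := by
    rw [Nat.sub_zero]
    exact Function.update_of_ne h0j _ _
  have e4' : (phiT n 0 j t).2.1 0 - 1 = t.2.1 0 := by
    show Function.update t.2.1 0 (t.2.1 0 + 1) 0 - 1 = _
    rw [Function.update_self]
    omega
  have e5 : (phiT n j j t).2.2 0 = t.2.2 0 := Function.update_of_ne h0j _ _
  have e5' : (phiT n 0 j t).2.2 0 = t.2.2 0 := Function.update_of_ne h0j _ _
  have e6 : (∏ i ∈ Finset.univ.erase 0,
        piQ ((phiT n j j t).2.1 i) ((phiT n j j t).2.2 i) ((phiT n j j t).1 i) (m i))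
      = piQ (t.2.1 j + 1) b 0 (m j) * P := by
    rw [← Finset.mul_prod_erase (Finset.univ.erase 0) _
      (Finset.mem_erase.mpr ⟨hj0, Finset.mem_univ j⟩)]
    congr 1
    · show piQ (Function.update t.2.1 j (t.2.1 j + 1) j)
        (Function.update t.2.2 j (t.2.2 j - 1) j)
        (Function.update (Function.update t.1 0 1) j 0 j) (m j) = _
      rw [Function.update_self, Function.update_self, Function.update_self, hb,
        Nat.add_sub_cancel]
    · apply Finset.prod_congr rfl
      intro i hi
      rw [Finset.mem_erase, Finset.mem_erase] at hi
      obtain ⟨hij, hi0, -⟩ := hi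
      show piQ (Function.update t.2.1 j (t.2.1 j + 1) i)
        (Function.update t.2.2 j (t.2.2 j - 1) i)
        (Function.update (Function.update t.1 0 1) j 0 i) (m i) = _
      rw [Function.update_of_ne hij, Function.update_of_ne hij, Function.update_of_ne hij,
        Function.update_of_ne hi0]
  have e6' : (∏ i ∈ Finset.univ.erase 0,
        piQ ((phiT n 0 j t).2.1 i) ((phiT n 0 j t).2.2 i) ((phiT n 0 j t).1 i) (m i))
      = piQ (t.2.1 j) b 0 (m j) * P := by
    rw [← Finset.mul_prod_erase (Finset.univ.erase 0) _
      (Finset.mem_erase.mpr ⟨hj0, Finset.mem_univ j⟩)]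
    congr 1
    · show piQ (Function.update t.2.1 0 (t.2.1 0 + 1) j)
        (Function.update t.2.2 j (t.2.2 j - 1) j)
        (Function.update (Function.update t.1 0 1) j 0 j) (m j) = _
      rw [Function.update_of_ne hj0, Function.update_self, Function.update_self, hb,
        Nat.add_sub_cancel]
    · apply Finset.prod_congr rfl
      intro i hi
      rw [Finset.mem_erase, Finset.mem_erase] at hi
      obtain ⟨hij, hi0, -⟩ := hi
      show piQ (Function.update t.2.1 0 (t.2.1 0 + 1) i)
        (Function.update t.2.2 j (t.2.2 j - 1) i)
        (Function.update (Function.update t.1 0 1) j 0 i) (m i) = _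
      rw [Function.update_of_ne hi0, Function.update_of_ne hij, Function.update_of_ne hij,
        Function.update_of_ne hi0]
  unfold qq
  rw [e1, e1', e2, e2', e3, e3', e4, e4', e5, e5', e6, e6', hsplit, hεj, hb]
  push_cast
  linear_combination ((Nat.factorial (∑ i, t.2.1 i) : ℚ) *
    (Nat.factorial ((∑ i, t.2.2 i) - 1) : ℚ) *
    piQ (t.2.1 0) (t.2.2 0) (-1) (m 0) * P) * piQ_R2 (t.2.1 j) b (m j)

lemma term_R_pos (n : ℕ) [NeZero n] (m : Fin n → ℚ) (j : Fin n) (hj : 2 ≤ j.val) {t : Tup n}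
    (htI : t ∈ IsetE n 1 1) (hεj : t.1 j = 0) (hr0 : 1 ≤ t.2.1 0) :
    (Nat.factorial ((∑ i, t.2.1 i) - 1) : ℚ) * (Nat.factorial (∑ i, t.2.2 i) : ℚ) *
      (1 - (t.1 j : ℚ)) * (t.2.1 j : ℚ) * ∏ i, piQ (t.2.1 i) (t.2.2 i) (t.1 i) (m i)
    = qq n m j 0 t + qq n m j 1 t := by
  have hε0 : t.1 0 = 1 := ((mem_IsetE_iff.mp htI).2.2.2.1 0).1 rfl
  obtain ⟨a, ha⟩ : ∃ a, t.2.1 0 = a + 1 := ⟨t.2.1 0 - 1, by omega⟩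
  have hsplit : ∏ i, piQ (t.2.1 i) (t.2.2 i) (t.1 i) (m i)
      = piQ (t.2.1 0) (t.2.2 0) (t.1 0) (m 0) *
        ∏ i ∈ Finset.univ.erase 0, piQ (t.2.1 i) (t.2.2 i) (t.1 i) (m i) :=
    (Finset.mul_prod_erase Finset.univ _ (Finset.mem_univ 0)).symm
  unfold qq
  rw [hsplit, hε0, hεj, ha, piQ_R1_succ a (t.2.2 0) (m 0), Nat.sub_zero, Nat.add_sub_cancel]
  push_cast
  ring

lemma term_R_zero (n : ℕ) [NeZero n] (m : Fin n → ℚ) (j : Fin n) (hj : 2 ≤ j.val) {t : Tup n}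
    (htI : t ∈ IsetE n 1 1) (hεj : t.1 j = 0) (hr0 : t.2.1 0 = 0) :
    (Nat.factorial ((∑ i, t.2.1 i) - 1) : ℚ) * (Nat.factorial (∑ i, t.2.2 i) : ℚ) *
      (1 - (t.1 j : ℚ)) * (t.2.1 j : ℚ) * ∏ i, piQ (t.2.1 i) (t.2.2 i) (t.1 i) (m i)
    = qq n m j 0 t := by
  have hε0 : t.1 0 = 1 := ((mem_IsetE_iff.mp htI).2.2.2.1 0).1 rfl
  have hsplit : ∏ i, piQ (t.2.1 i) (t.2.2 i) (t.1 i) (m i)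
      = piQ (t.2.1 0) (t.2.2 0) (t.1 0) (m 0) *
        ∏ i ∈ Finset.univ.erase 0, piQ (t.2.1 i) (t.2.2 i) (t.1 i) (m i) :=
    (Finset.mul_prod_erase Finset.univ _ (Finset.mem_univ 0)).symm
  unfold qq
  rw [hsplit, hε0, hεj, hr0, piQ_R1_zero (t.2.2 0) (m 0), Nat.sub_zero]
  push_cast
  ring

/-- Transmutation relation between `I^{(-1,1)}` and `I^{(1,1)}`, with `n = N+3 ≥ 3`,
`m_i` half-integers and `j ∈ {3,…,n}` (Lean index `j.val ≥ 2`):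
`Σ_{I^{(-1,1)}, s≥1} r!·(s-1)!·ε_j·s_j·Π = Σ_{I^{(1,1)}, r≥1} (r-1)!·s!·(1-ε_j)·r_j·Π`. -/
theorem stmt14 (N : ℕ) (m : Fin (N + 3) → ℚ) (hm : ∀ i, ∃ z : ℤ, 2 * m i = (z : ℚ))
    (j : Fin (N + 3)) (hj : 2 ≤ j.val) :
    (∑ t ∈ (IsetE (N + 3) (-1) 1).filter fun t => 1 ≤ ∑ i, t.2.2 i,
        (Nat.factorial (∑ i, t.2.1 i) : ℚ) * (Nat.factorial ((∑ i, t.2.2 i) - 1) : ℚ) *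
          (t.1 j : ℚ) * (t.2.2 j : ℚ) * ∏ i, piQ (t.2.1 i) (t.2.2 i) (t.1 i) (m i)) =
      ∑ t ∈ (IsetE (N + 3) 1 1).filter fun t => 1 ≤ ∑ i, t.2.1 i,
        (Nat.factorial ((∑ i, t.2.1 i) - 1) : ℚ) * (Nat.factorial (∑ i, t.2.2 i) : ℚ) *
          (1 - (t.1 j : ℚ)) * (t.2.1 j : ℚ) * ∏ i, piQ (t.2.1 i) (t.2.2 i) (t.1 i) (m i) := by
  have hj0 : j ≠ 0 := by
    intro h
    rw [h] at hj
    simp at hj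
  haveI : NeZero (N+3) := ⟨by omega⟩
  have hL1 : (∑ t ∈ (IsetE (N + 3) (-1) 1).filter fun t => 1 ≤ ∑ i, t.2.2 i,
        (Nat.factorial (∑ i, t.2.1 i) : ℚ) * (Nat.factorial ((∑ i, t.2.2 i) - 1) : ℚ) *
          (t.1 j : ℚ) * (t.2.2 j : ℚ) * ∏ i, piQ (t.2.1 i) (t.2.2 i) (t.1 i) (m i))
      = ∑ t ∈ (IsetE (N + 3) (-1) 1).filter (fun t => t.1 j = 1 ∧ 1 ≤ t.2.2 j),
        (Nat.factorial (∑ i, t.2.1 i) : ℚ) * (Nat.factorial ((∑ i, t.2.2 i) - 1) : ℚ) *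
          (t.1 j : ℚ) * (t.2.2 j : ℚ) * ∏ i, piQ (t.2.1 i) (t.2.2 i) (t.1 i) (m i) := by
    refine (Finset.sum_subset ?_ ?_).symm
    · intro x hx
      rw [Finset.mem_filter] at hx ⊢
      exact ⟨hx.1, le_trans hx.2.2
        (Finset.single_le_sum (fun i _ => Nat.zero_le _) (Finset.mem_univ j))⟩
    · intro x hx hnot
      rw [Finset.mem_filter] at hx hnot
      have hfail : ¬(x.1 j = 1 ∧ 1 ≤ x.2.2 j) := fun hcon => hnot ⟨hx.1, hcon⟩
      by_cases hs : 1 ≤ x.2.2 j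
      · have hε : x.1 j ≠ 1 := fun h => hfail ⟨h, hs⟩
        have hx0 : x.1 j = 0 := by
          rcases ((mem_IsetE_iff.mp hx.1).2.2.2.1 j).2.2 hj with h | h
          · exact h
          · exact absurd h hε
        simp [hx0]
      · have hx0 : x.2.2 j = 0 := by omega
        simp [hx0]
  have hL2 : (∑ t ∈ (IsetE (N + 3) (-1) 1).filter (fun t => t.1 j = 1 ∧ 1 ≤ t.2.2 j),
        (Nat.factorial (∑ i, t.2.1 i) : ℚ) * (Nat.factorial ((∑ i, t.2.2 i) - 1) : ℚ) *
          (t.1 j : ℚ) * (t.2.2 j : ℚ) * ∏ i, piQ (t.2.1 i) (t.2.2 i) (t.1 i) (m i))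
      = ∑ t ∈ (IsetE (N + 3) (-1) 1).filter (fun t => t.1 j = 1 ∧ 1 ≤ t.2.2 j),
          (qq (N+3) m j 0 (phiT (N+3) j j t) + qq (N+3) m j 1 (phiT (N+3) 0 j t)) := by
    refine Finset.sum_congr rfl ?_
    intro t ht
    rw [Finset.mem_filter] at ht
    exact term_L (N+3) m j hj ht.1 ht.2.1 ht.2.2
  rw [hL1, hL2, Finset.sum_add_distrib, sum_phi (N+3) j hj j (qq (N+3) m j 0),
    sum_phi (N+3) j hj 0 (qq (N+3) m j 1)]
  -- now the RHS
  have hR1 : (∑ t ∈ (IsetE (N + 3) 1 1).filter fun t => 1 ≤ ∑ i, t.2.1 i,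
        (Nat.factorial ((∑ i, t.2.1 i) - 1) : ℚ) * (Nat.factorial (∑ i, t.2.2 i) : ℚ) *
          (1 - (t.1 j : ℚ)) * (t.2.1 j : ℚ) * ∏ i, piQ (t.2.1 i) (t.2.2 i) (t.1 i) (m i))
      = ∑ t ∈ (IsetE (N + 3) 1 1).filter (fun t => t.1 j = 0 ∧ 1 ≤ t.2.1 j),
        (Nat.factorial ((∑ i, t.2.1 i) - 1) : ℚ) * (Nat.factorial (∑ i, t.2.2 i) : ℚ) *
          (1 - (t.1 j : ℚ)) * (t.2.1 j : ℚ) * ∏ i, piQ (t.2.1 i) (t.2.2 i) (t.1 i) (m i) := by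
    refine (Finset.sum_subset ?_ ?_).symm
    · intro x hx
      rw [Finset.mem_filter] at hx ⊢
      exact ⟨hx.1, le_trans hx.2.2
        (Finset.single_le_sum (fun i _ => Nat.zero_le _) (Finset.mem_univ j))⟩
    · intro x hx hnot
      rw [Finset.mem_filter] at hx hnot
      have hfail : ¬(x.1 j = 0 ∧ 1 ≤ x.2.1 j) := fun hcon => hnot ⟨hx.1, hcon⟩
      by_cases hs : 1 ≤ x.2.1 j
      · have hε : x.1 j ≠ 0 := fun h => hfail ⟨h, hs⟩
        have hx0 : x.1 j = 1 := by
          rcases ((mem_IsetE_iff.mp hx.1).2.2.2.1 j).2.2 hj with h | h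
          · exact absurd h hε
          · exact h
        simp [hx0]
      · have hx0 : x.2.1 j = 0 := by omega
        simp [hx0]
  have hR2 : (∑ t ∈ ((IsetE (N + 3) 1 1).filter
          (fun t => t.1 j = 0 ∧ 1 ≤ t.2.1 j)).filter (fun t => 1 ≤ t.2.1 0),
        (Nat.factorial ((∑ i, t.2.1 i) - 1) : ℚ) * (Nat.factorial (∑ i, t.2.2 i) : ℚ) *
          (1 - (t.1 j : ℚ)) * (t.2.1 j : ℚ) * ∏ i, piQ (t.2.1 i) (t.2.2 i) (t.1 i) (m i))
      = ∑ t ∈ ((IsetE (N + 3) 1 1).filter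
          (fun t => t.1 j = 0 ∧ 1 ≤ t.2.1 j)).filter (fun t => 1 ≤ t.2.1 0),
          (qq (N+3) m j 0 t + qq (N+3) m j 1 t) := by
    refine Finset.sum_congr rfl ?_
    intro t ht
    rw [Finset.mem_filter, Finset.mem_filter] at ht
    exact term_R_pos (N+3) m j hj ht.1.1 ht.1.2.1 ht.2
  have hR3 : (∑ t ∈ ((IsetE (N + 3) 1 1).filter
          (fun t => t.1 j = 0 ∧ 1 ≤ t.2.1 j)).filter (fun t => ¬ 1 ≤ t.2.1 0),
        (Nat.factorial ((∑ i, t.2.1 i) - 1) : ℚ) * (Nat.factorial (∑ i, t.2.2 i) : ℚ) *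
          (1 - (t.1 j : ℚ)) * (t.2.1 j : ℚ) * ∏ i, piQ (t.2.1 i) (t.2.2 i) (t.1 i) (m i))
      = ∑ t ∈ ((IsetE (N + 3) 1 1).filter
          (fun t => t.1 j = 0 ∧ 1 ≤ t.2.1 j)).filter (fun t => ¬ 1 ≤ t.2.1 0),
          qq (N+3) m j 0 t := by
    refine Finset.sum_congr rfl ?_
    intro t ht
    rw [Finset.mem_filter, Finset.mem_filter] at ht
    exact term_R_zero (N+3) m j hj ht.1.1 ht.1.2.1 (by omega)
  have hR4 : (∑ t ∈ ((IsetE (N + 3) 1 1).filter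
          (fun t => t.1 j = 0 ∧ 1 ≤ t.2.1 j)).filter (fun t => 1 ≤ t.2.1 0),
        qq (N+3) m j 0 t)
      + (∑ t ∈ ((IsetE (N + 3) 1 1).filter
          (fun t => t.1 j = 0 ∧ 1 ≤ t.2.1 j)).filter (fun t => ¬ 1 ≤ t.2.1 0),
        qq (N+3) m j 0 t)
      = ∑ t ∈ (IsetE (N + 3) 1 1).filter (fun t => t.1 j = 0 ∧ 1 ≤ t.2.1 j),
          qq (N+3) m j 0 t :=
    Finset.sum_filter_add_sum_filter_not _ _ _
  have hR5 : (∑ t ∈ ((IsetE (N + 3) 1 1).filter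
          (fun t => t.1 j = 0 ∧ 1 ≤ t.2.1 j)).filter (fun t => 1 ≤ t.2.1 0),
        qq (N+3) m j 1 t)
      = ∑ t ∈ (IsetE (N + 3) 1 1).filter (fun t => t.1 j = 0 ∧ 1 ≤ t.2.1 0),
          qq (N+3) m j 1 t := by
    refine Finset.sum_subset ?_ ?_
    · intro x hx
      rw [Finset.mem_filter, Finset.mem_filter] at hx
      rw [Finset.mem_filter]
      exact ⟨hx.1.1, hx.1.2.1, hx.2⟩
    · intro x hx hnot
      rw [Finset.mem_filter] at hx
      rw [Finset.mem_filter, Finset.mem_filter] at hnot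
      have hxj : x.2.1 j = 0 := by
        by_contra hne
        exact hnot ⟨⟨hx.1, hx.2.1, by omega⟩, hx.2.2⟩
      unfold qq
      simp [hxj]
  rw [hR1]
  rw [← Finset.sum_filter_add_sum_filter_not
    ((IsetE (N + 3) 1 1).filter (fun t => t.1 j = 0 ∧ 1 ≤ t.2.1 j)) (fun t => 1 ≤ t.2.1 0)
    (fun t => (Nat.factorial ((∑ i, t.2.1 i) - 1) : ℚ) * (Nat.factorial (∑ i, t.2.2 i) : ℚ) *
      (1 - (t.1 j : ℚ)) * (t.2.1 j : ℚ) * ∏ i, piQ (t.2.1 i) (t.2.2 i) (t.1 i) (m i))]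
  rw [hR2, hR3, Finset.sum_add_distrib, hR5, ← hR4]
  ring
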